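/- Every proper level-2 network is tree-based. -/

import Mathlib

open SimpleGraph

/-- Degree of a vertex (as the cardinality of its neighbour set). -/
noncomputable def deg {W : Type*} (G : SimpleGraph W) (v : W) : ℕ :=
  (G.neighborSet v).ncard

/-- `T` is a support-tree for `G` with leaf set `X`: a spanning tree of `G`
whose leaves (vertices of degree at most 1) are exactly `X`. -/
def IsSupportTree {W : Type*} (G T : SimpleGraph W) (X : Set W) : Prop :=
  T ≤ G ∧ T.IsTree ∧ {v | deg T v ≤ 1} = X

/-- A graph is tree-based on `X` if it has a support-tree with leaf set `X`. -/
def TreeBased {W : Type*} (G : SimpleGraph W) (X : Set W) : Prop :=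
  ∃ T, IsSupportTree G T X

/-- An unrooted phylogenetic network on `X`: a connected graph all of whose
vertices have degree 1 or 3 (allowing the single-vertex convention via `≤ 1`),
whose leaves are exactly `X`. -/
def IsNetwork {W : Type*} (G : SimpleGraph W) (X : Set W) : Prop :=
  G.Connected ∧ (∀ v, deg G v ≤ 1 ∨ deg G v = 3) ∧ {v | deg G v ≤ 1} = X

/-- The cut-edge `{u,v}` induces a split of `X`: each side of the deleted edge
contains an element of `X`. -/
def InducesSplit {W : Type*} (G : SimpleGraph W) (X : Set W) (u v : W) : Prop :=
  (∃ a ∈ X, (G.deleteEdges {s(u, v)}).Reachable u a) ∧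
    ∃ b ∈ X, (G.deleteEdges {s(u, v)}).Reachable v b

/-- A network is proper if every cut-edge induces a split of `X`. -/
def ProperNet {W : Type*} (G : SimpleGraph W) (X : Set W) : Prop :=
  ∀ u v : W, (s(u, v) ∈ G.edgeSet ∧ G.IsBridge s(u, v)) → InducesSplit G X u v

/-- A network is simple if every cut-edge is trivial, i.e. has a leaf endpoint. -/
def SimpleNet {W : Type*} (G : SimpleGraph W) (X : Set W) : Prop :=
  ∀ u v : W, (s(u, v) ∈ G.edgeSet ∧ G.IsBridge s(u, v)) → u ∈ X ∨ v ∈ X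

/-- A graph is bridgeless if it has no cut-edge. -/
def Bridgeless {W : Type*} (H : SimpleGraph W) : Prop :=
  ∀ e, ¬ (e ∈ H.edgeSet ∧ H.IsBridge e)

/-- A blob of `G`: a maximal connected subgraph without a cut-edge that is not
a single vertex. -/
def IsBlob {W : Type*} (G : SimpleGraph W) (B : G.Subgraph) : Prop :=
  B.verts.Nontrivial ∧ B.Connected ∧ Bridgeless B.coe ∧
    ∀ B' : G.Subgraph, B'.verts.Nontrivial → B'.Connected → Bridgeless B'.coe →
      B ≤ B' → B = B'

/-- The simple network `B_N` associated to a blob `B`: the union of `B` with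
all cut-edges of `G` incident to `B`. -/
def blobNet {W : Type*} (G : SimpleGraph W) (B : G.Subgraph) : G.Subgraph where
  verts := B.verts ∪ {w | ∃ u ∈ B.verts, (s(u, w) ∈ G.edgeSet ∧ G.IsBridge s(u, w))}
  Adj a b := B.Adj a b ∨ ((s(a, b) ∈ G.edgeSet ∧ G.IsBridge s(a, b)) ∧ (a ∈ B.verts ∨ b ∈ B.verts))
  adj_sub := by
    rintro v w (h | ⟨h, -⟩)
    · exact B.adj_sub h
    · exact (SimpleGraph.mem_edgeSet G).mp h.1
  edge_vert := by
    rintro v w (h | ⟨h, hv | hw⟩)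
    · exact Or.inl (B.edge_vert h)
    · exact Or.inl hv
    · exact Or.inr ⟨w, hw, by rwa [Sym2.eq_swap]⟩
  symm := ⟨by
    rintro v w (h | ⟨h, hc⟩)
    · exact Or.inl (B.adj_symm h)
    · exact Or.inr ⟨by rwa [Sym2.eq_swap], hc.symm⟩⟩

/-- The leaf set of `B_N`: endpoints of incident cut-edges not lying in `B`. -/
def blobNetLeaves {W : Type*} (G : SimpleGraph W) (B : G.Subgraph) :
    Set (blobNet G B).verts :=
  {w | (w : W) ∉ B.verts}

/-- `G` is a level-`k` network: at most `k` edges must be removed from each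
blob to obtain a tree. -/
def Level {W : Type*} (G : SimpleGraph W) (k : ℕ) : Prop :=
  ∀ B : G.Subgraph, IsBlob G B → B.edgeSet.ncard ≤ B.verts.ncard - 1 + k
/-- The network `N − x`: delete leaf `x` and its incident edge and suppress the
resulting degree-2 vertex `v` (the former neighbour of `x`). -/
def suppressAdj {V : Type*} (G : SimpleGraph V) (x v : V) :
    SimpleGraph {w : V // w ≠ x ∧ w ≠ v} where
  Adj a b := a ≠ b ∧ (G.Adj a b ∨ (G.Adj v a ∧ G.Adj v b))
  symm := ⟨by
    rintro a b ⟨h1, h2 | ⟨h3, h4⟩⟩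
    · exact ⟨h1.symm, Or.inl h2.symm⟩
    · exact ⟨h1.symm, Or.inr ⟨h4, h3⟩⟩⟩
  loopless := ⟨by rintro a ⟨h1, -⟩; exact h1 rfl⟩

/-- The network `C_e(x,y)`: replace the edge `e = {u,v}` of `C` by a path
`u – w₁ – w₂ – v` and attach pendant leaves `x = Sum.inr 2` to `w₁ = Sum.inr 0`
and `y = Sum.inr 3` to `w₂ = Sum.inr 1`. -/
def extGraph {W : Type*} (C : SimpleGraph W) (u v : W) : SimpleGraph (W ⊕ Fin 4) :=
  SimpleGraph.fromEdgeSet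
    ((Sym2.map Sum.inl) '' (C.edgeSet \ {s(u, v)}) ∪
      {s(Sum.inl u, Sum.inr 0), s(Sum.inr 0, Sum.inr 1), s(Sum.inr 1, Sum.inl v),
       s(Sum.inr 0, Sum.inr 2), s(Sum.inr 1, Sum.inr 3)})

/-- The leaves `x` and `y` of `C_e(x,y)`. -/
def extLeaves (W : Type*) : Set (W ⊕ Fin 4) := {Sum.inr 2, Sum.inr 3}

/-- The Petersen graph, realized as the Kneser graph K(5,2). -/
def petersen : SimpleGraph {s : Finset (Fin 5) // s.card = 2} where
  Adj a b := Disjoint (a : Finset (Fin 5)) (b : Finset (Fin 5))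
  symm := ⟨fun a b h => h.symm⟩
  loopless := ⟨fun a h => by
    have h2 : (a : Finset (Fin 5)) = ∅ := by
      simpa using disjoint_self.mp h
    have := a.2
    rw [h2] at this
    simp at this⟩

/-- `D` is an orientation of the edges of `G`. -/
def IsOrientation {V : Type*} (G : SimpleGraph V) (D : V → V → Prop) : Prop :=
  (∀ u v, G.Adj u v ↔ (D u v ∨ D v u)) ∧ ∀ u v, ¬ (D u v ∧ D v u)

noncomputable def outdeg {α : Type*} (r : α → α → Prop) (v : α) : ℕ := {w | r v w}.ncard
noncomputable def indeg {α : Type*} (r : α → α → Prop) (v : α) : ℕ := {w | r w v}.ncard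

/-- A rooted (binary) phylogenetic network with root `ρ` and leaf set `Y`:
a DAG with a unique root of indegree 0 and outdegree 2, leaves (outdegree 0,
indegree 1) exactly `Y`, and all non-root vertices of total degree 1 or 3. -/
def IsRootedNetwork {α : Type*} (r : α → α → Prop) (ρ : α) (Y : Set α) : Prop :=
  (∀ v, ¬ Relation.TransGen r v v) ∧
  indeg r ρ = 0 ∧ outdeg r ρ = 2 ∧
  (∀ v, indeg r v = 0 → v = ρ) ∧
  (∀ v, v ≠ ρ → indeg r v + outdeg r v = 1 ∨ indeg r v + outdeg r v = 3) ∧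
  {v | outdeg r v = 0} = Y ∧ (∀ v ∈ Y, indeg r v = 1)

/-- A rooted network is tree-based if it contains a spanning arborescence
rooted at `ρ` whose leaf set is `Y`. -/
def RootedTreeBased {α : Type*} (r : α → α → Prop) (ρ : α) (Y : Set α) : Prop :=
  ∃ t : α → α → Prop, (∀ a b, t a b → r a b) ∧
    (∀ v, Relation.ReflTransGen t ρ v) ∧
    (∀ v, v ≠ ρ → indeg t v = 1) ∧ indeg t ρ = 0 ∧
    {v | outdeg t v = 0} = Y

/-- `T` is obtained from `T'` by suppressing all degree-2 vertices, via the
embedding `f` of the vertices of `T` into those of `T'`. -/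
def Suppresses {A B : Type*} (T' : SimpleGraph A) (T : SimpleGraph B) (f : B → A) : Prop :=
  Function.Injective f ∧
  (∀ a : A, deg T' a ≠ 2 → a ∈ Set.range f) ∧
  (∀ b : B, deg T' (f b) ≠ 2) ∧
  ∀ b b' : B, T.Adj b b' ↔
    ∃ p : T'.Walk (f b) (f b'), p.IsPath ∧
      ∀ a ∈ p.support, a ≠ f b → a ≠ f b' → deg T' a = 2

/-- `G` is fully tree-based on `X`: every subtree of `G` whose leaf set is `X`
is spanning (hence a support-tree). -/
def FullyTreeBased {W : Type*} (G : SimpleGraph W) (X : Set W) : Prop :=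
  ∀ H : G.Subgraph, H.Connected → H.coe.IsAcyclic →
    {v | v ∈ H.verts ∧ (H.neighborSet v).ncard ≤ 1} = X → H.IsSpanning

set_option linter.unusedSectionVars false
set_option maxHeartbeats 1000000
namespace TBaux

open SimpleGraph Walk

variable {V : Type*}

lemma reachable_relay {G K : SimpleGraph V} (h : ∀ a b, G.Adj a b → K.Reachable a b)
    {a b : V} (hr : G.Reachable a b) : K.Reachable a b := by
  obtain ⟨p⟩ := hr
  induction p with
  | nil => exact Reachable.refl _
  | cons ha p ih => exact (h _ _ ha).trans ih

lemma delconn {G : SimpleGraph V} (hc : G.Connected) {e : Sym2 V} (he : ¬ G.IsBridge e) :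
    (G.deleteEdges {e}).Connected := by
  rw [connected_iff] at hc ⊢
  refine ⟨fun a b => ?_, hc.2⟩
  refine reachable_relay ?_ (hc.1 a b)
  intro x y hxy
  by_cases hxye : s(x, y) = e
  · subst hxye
    rw [isBridge_iff] at he
    push_neg at he
    exact he
  · exact Adj.reachable (by rw [deleteEdges_adj]; exact ⟨hxy, by simp [hxye]⟩)

variable [Fintype V]

lemma tree_ncard {S : SimpleGraph V} (h : S.IsTree) :
    S.edgeSet.ncard + 1 = Fintype.card V := by
  classical
  have h2 := h.card_edgeFinset
  rw [← coe_edgeFinset, Set.ncard_coe_finset]; convert h2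

lemma not_acyclic_nonbridge {G : SimpleGraph V} (h : ¬ G.IsAcyclic) :
    ∃ u v, G.Adj u v ∧ ¬ G.IsBridge s(u, v) := by
  by_contra hcon
  push_neg at hcon
  exact h (isAcyclic_iff_forall_adj_isBridge.mpr fun u v huv => hcon u v huv)

lemma exists_spanning_tree_aux :
    ∀ (n : ℕ) (G : SimpleGraph V), G.edgeSet.ncard ≤ n → G.Connected → ∃ S ≤ G, S.IsTree := by
  intro n
  induction n with
  | zero =>
    intro G hn hc
    refine ⟨G, le_rfl, hc, ?_⟩
    by_contra hna
    obtain ⟨u, v, huv, -⟩ := not_acyclic_nonbridge hna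
    have : G.edgeSet = ∅ := by
      rw [← Set.ncard_eq_zero (Set.toFinite _)]; omega
    exact absurd ((mem_edgeSet G).mpr huv) (by simp [this])
  | succ n ih =>
    intro G hn hc
    by_cases ha : G.IsAcyclic
    · exact ⟨G, le_rfl, hc, ha⟩
    · obtain ⟨u, v, huv, hnb⟩ := not_acyclic_nonbridge ha
      have hmem : s(u, v) ∈ G.edgeSet := huv
      have hcard : (G.deleteEdges {s(u, v)}).edgeSet.ncard ≤ n := by
        rw [edgeSet_deleteEdges]
        have := Set.ncard_diff_singleton_add_one hmem (Set.toFinite _)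
        omega
      obtain ⟨S, hle, ht⟩ := ih _ hcard (delconn hc hnb)
      exact ⟨S, hle.trans (deleteEdges_le _), ht⟩

lemma exists_spanning_tree {G : SimpleGraph V} (hc : G.Connected) : ∃ S ≤ G, S.IsTree :=
  exists_spanning_tree_aux G.edgeSet.ncard G le_rfl hc

lemma isTree_of_connected_card {G : SimpleGraph V} (hc : G.Connected)
    (hcard : G.edgeSet.ncard + 1 ≤ Fintype.card V) : G.IsTree := by
  obtain ⟨S, hle, ht⟩ := exists_spanning_tree hc
  have h1 := tree_ncard ht
  have h2 : S.edgeSet ⊆ G.edgeSet := edgeSet_mono hle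
  have h3 : G.edgeSet = S.edgeSet :=
    (Set.eq_of_subset_of_ncard_le h2 (by omega) (Set.toFinite _)).symm
  rwa [← edgeSet_inj.mp h3.symm]

lemma del_one_tree {A : SimpleGraph V} (hc : A.Connected)
    (hcard : A.edgeSet.ncard ≤ Fintype.card V) {g : Sym2 V} (hg : g ∈ A.edgeSet)
    (hnb : ¬ A.IsBridge g) : (A.deleteEdges {g}).IsTree := by
  refine isTree_of_connected_card (delconn hc hnb) ?_
  rw [edgeSet_deleteEdges]
  have := Set.ncard_diff_singleton_add_one hg (Set.toFinite _)
  omega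

omit [Fintype V] in
lemma walk_split {G : SimpleGraph V} {c d : V} :
    ∀ {a b : V} (p : G.Walk a b), p.edges.Nodup → s(c, d) ∈ p.edges →
    (∃ (q1 : G.Walk a c) (q2 : G.Walk d b),
      (∀ e ∈ q1.edges, e ∈ p.edges ∧ e ≠ s(c, d)) ∧
      (∀ e ∈ q2.edges, e ∈ p.edges ∧ e ≠ s(c, d))) ∨
    (∃ (q1 : G.Walk a d) (q2 : G.Walk c b),
      (∀ e ∈ q1.edges, e ∈ p.edges ∧ e ≠ s(c, d)) ∧
      (∀ e ∈ q2.edges, e ∈ p.edges ∧ e ≠ s(c, d))) := by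
  intro a b p
  induction p with
  | nil => intro _ he; simp at he
  | @cons u v' w h p' ih =>
    intro hnd he
    rw [Walk.edges_cons, List.nodup_cons] at hnd
    rw [Walk.edges_cons, List.mem_cons] at he
    rcases he with he | he
    · have he' := he.symm
      rw [Sym2.eq_iff] at he'
      rcases he' with ⟨rfl, rfl⟩ | ⟨rfl, rfl⟩
      · left
        refine ⟨Walk.nil, p', by simp, fun e hep => ⟨by simp [hep], ?_⟩⟩
        rintro rfl; exact hnd.1 (by simpa [Sym2.eq_swap] using hep)
      · right
        refine ⟨Walk.nil, p', by simp, fun e hep => ⟨by simp [hep], ?_⟩⟩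
        rintro rfl; exact hnd.1 (by simpa [Sym2.eq_swap] using hep)
    · have hne : s(u, v') ≠ s(c, d) := by rintro heq; rw [heq] at hnd; exact hnd.1 he
      rcases ih hnd.2 he with ⟨q1, q2, h1, h2⟩ | ⟨q1, q2, h1, h2⟩
      · left
        refine ⟨Walk.cons h q1, q2, ?_, fun e hee => ⟨by simp [(h2 e hee).1], (h2 e hee).2⟩⟩
        intro e hee
        rw [Walk.edges_cons, List.mem_cons] at hee
        rcases hee with rfl | hee
        · exact ⟨by simp, hne⟩
        · exact ⟨by simp [(h1 e hee).1], (h1 e hee).2⟩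
      · right
        refine ⟨Walk.cons h q1, q2, ?_, fun e hee => ⟨by simp [(h2 e hee).1], (h2 e hee).2⟩⟩
        intro e hee
        rw [Walk.edges_cons, List.mem_cons] at hee
        rcases hee with rfl | hee
        · exact ⟨by simp, hne⟩
        · exact ⟨by simp [(h1 e hee).1], (h1 e hee).2⟩

omit [Fintype V] in
lemma subgraph_mem_edgeSet_deleteEdges {G : SimpleGraph V} {H : G.Subgraph} {s : Set (Sym2 V)}
    {e : Sym2 V} : e ∈ (H.deleteEdges s).edgeSet ↔ e ∈ H.edgeSet ∧ e ∉ s := by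
  induction e using Sym2.ind with
  | _ x y => simp [Subgraph.mem_edgeSet]

omit [Fintype V] in
lemma walk_in {G : SimpleGraph V} (H : G.Subgraph) :
    ∀ {a b : V} (p : G.Walk a b), (∀ e ∈ p.edges, e ∈ H.edgeSet) → ∀ (ha : a ∈ H.verts),
      ∃ hb : b ∈ H.verts, H.coe.Reachable ⟨a, ha⟩ ⟨b, hb⟩ := by
  intro a b p
  induction p with
  | nil => intro _ ha; exact ⟨ha, Reachable.refl _⟩
  | @cons u x w h p' ih =>
    intro hed ha
    have hadj : H.Adj u x := Subgraph.mem_edgeSet.mp (hed _ (by simp))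
    have hx : x ∈ H.verts := H.edge_vert hadj.symm
    obtain ⟨hb, hr⟩ := ih (fun e hee => hed e (by simp [hee])) hx
    exact ⟨hb, (Adj.reachable (by exact hadj : H.coe.Adj ⟨u, ha⟩ ⟨x, hx⟩)).trans hr⟩

omit [Fintype V] in
lemma bridgeless_coe_iff {G : SimpleGraph V} (H : G.Subgraph) :
    Bridgeless H.coe ↔ ∀ a b (hab : H.Adj a b),
      ((H.deleteEdges {s(a, b)}).coe).Reachable ⟨a, H.edge_vert hab⟩ ⟨b, H.edge_vert hab.symm⟩ := by
  constructor
  · intro hb a b hab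
    have h1 := hb s(⟨a, H.edge_vert hab⟩, ⟨b, H.edge_vert hab.symm⟩)
    rw [isBridge_iff] at h1
    push_neg at h1
    have h2 := h1 (by exact hab)
    have h3 : (H.coe \ SimpleGraph.fromEdgeSet {s((⟨a, H.edge_vert hab⟩ : H.verts), ⟨b, H.edge_vert hab.symm⟩)}) = H.coe.deleteEdges {s(⟨a, H.edge_vert hab⟩, ⟨b, H.edge_vert hab.symm⟩)} := rfl
    rw [Subgraph.deleteEdges_coe_eq] at h2
    have h4 : (Sym2.map (↑) '' {s((⟨a, H.edge_vert hab⟩ : H.verts), ⟨b, H.edge_vert hab.symm⟩)} : Set (Sym2 V)) = {s(a, b)} := by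
      rw [Set.image_singleton, Sym2.map_pair_eq]
    rwa [h4] at h2
  · intro h e
    induction e using Sym2.ind with
    | _ x y =>
      rw [isBridge_iff]
      rintro ⟨hadj, hnr⟩
      have hadj' : H.Adj ↑x ↑y := hadj
      have := h ↑x ↑y hadj'
      apply hnr
      have h3 : (H.coe \ SimpleGraph.fromEdgeSet {s(x, y)}) = H.coe.deleteEdges {s(x, y)} := rfl
      rw [Subgraph.deleteEdges_coe_eq]
      have h4 : (Sym2.map (↑) '' {s(x, y)} : Set (Sym2 V)) = {s((x : V), (y : V))} := by
        rw [Set.image_singleton, Sym2.map_pair_eq]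
      rw [h4]
      exact this

omit [Fintype V] in
lemma cycle_toSubgraph_bridgeless {G : SimpleGraph V} {u : V} (c : G.Walk u u)
    (hc : c.IsCycle) : Bridgeless c.toSubgraph.coe := by
  classical
  rw [bridgeless_coe_iff]
  intro a b hab
  have hedge : s(a, b) ∈ c.edges := c.mem_edges_toSubgraph.mp (Subgraph.mem_edgeSet.mpr hab)
  have ha : a ∈ c.support := Walk.fst_mem_support_of_mem_edges c hedge
  set c' := c.rotate a ha with hc'def
  have hc' : c'.IsCycle := hc.rotate ha
  have hperm : c'.edges ~r c.edges := Walk.rotate_edges c a ha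
  have hedge' : s(a, b) ∈ c'.edges := hperm.mem_iff.mpr hedge
  have hnd : c'.edges.Nodup := hc'.edges_nodup
  have key : ∃ q : G.Walk a b, ∀ e ∈ q.edges, e ∈ c.edges ∧ e ≠ s(a, b) := by
    rcases walk_split c' hnd hedge' with ⟨q1, q2, h1, h2⟩ | ⟨q1, q2, h1, h2⟩
    · refine ⟨q2.reverse, fun e hee => ?_⟩
      rw [Walk.edges_reverse, List.mem_reverse] at hee
      exact ⟨hperm.mem_iff.mp (h2 e hee).1, (h2 e hee).2⟩
    · refine ⟨q1, fun e hee => ?_⟩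
      exact ⟨hperm.mem_iff.mp (h1 e hee).1, (h1 e hee).2⟩
  obtain ⟨q, hq⟩ := key
  have hav : a ∈ (c.toSubgraph.deleteEdges {s(a, b)}).verts := by
    rw [Subgraph.deleteEdges_verts]; exact c.mem_verts_toSubgraph.mpr ha
  obtain ⟨hb, hr⟩ := walk_in (c.toSubgraph.deleteEdges {s(a, b)}) q
    (fun e hee => subgraph_mem_edgeSet_deleteEdges.mpr
      ⟨c.mem_edges_toSubgraph.mpr (hq e hee).1, by simp [(hq e hee).2]⟩) hav
  convert hr using 2 <;> exact Subtype.ext rfl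

end TBaux

namespace TBaux

variable {V : Type*} [Fintype V]

instance subgraphFinite {G : SimpleGraph V} : Finite (G.Subgraph) :=
  Finite.of_injective (fun H => (H.verts, H.Adj))
    (fun H1 H2 h => Subgraph.ext (congrArg Prod.fst h) (congrArg Prod.snd h))

lemma exists_blob_above {G : SimpleGraph V} {C : G.Subgraph} (h1 : C.verts.Nontrivial)
    (h2 : C.Connected) (h3 : Bridgeless C.coe) : ∃ B, IsBlob G B ∧ C ≤ B := by
  set S : Set (G.Subgraph) :=
    {B | C ≤ B ∧ B.verts.Nontrivial ∧ B.Connected ∧ Bridgeless B.coe} with hS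
  obtain ⟨B, hBS, hmax⟩ := Set.Finite.exists_maximalFor id S (Set.toFinite S)
    ⟨C, le_rfl, h1, h2, h3⟩
  refine ⟨B, ⟨hBS.2.1, hBS.2.2.1, hBS.2.2.2, fun B' hn hc hb hle => ?_⟩, hBS.1⟩
  exact le_antisymm hle (hmax ⟨hBS.1.trans hle, hn, hc, hb⟩ hle)

lemma exists_blob_of_nonbridge {G : SimpleGraph V} {u v : V} (h : G.Adj u v)
    (hnb : ¬ G.IsBridge s(u, v)) : ∃ B, IsBlob G B ∧ B.Adj u v := by
  have hreach : G.Adj u v ∧ (G \ fromEdgeSet {s(u, v)}).Reachable u v := by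
    rw [isBridge_iff] at hnb; push_neg at hnb; exact ⟨h, hnb⟩
  obtain ⟨w, c, hc, he⟩ := adj_and_reachable_delete_edges_iff_exists_cycle.mp hreach
  have hadj0 : c.toSubgraph.Adj u v := Subgraph.mem_edgeSet.mp (c.mem_edges_toSubgraph.mpr he)
  have hnt : c.toSubgraph.verts.Nontrivial :=
    ⟨u, c.toSubgraph.edge_vert hadj0, v, c.toSubgraph.edge_vert hadj0.symm, h.ne⟩
  obtain ⟨B, hB, hle⟩ := exists_blob_above hnt c.toSubgraph_connected
    (cycle_toSubgraph_bridgeless c hc)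
  exact ⟨B, hB, hle.2 hadj0⟩

lemma bridgeless_sup {G : SimpleGraph V} {B1 B2 : G.Subgraph} (h1 : Bridgeless B1.coe)
    (h2 : Bridgeless B2.coe) : Bridgeless (B1 ⊔ B2).coe := by
  rw [bridgeless_coe_iff] at h1 h2 ⊢
  intro a b hab
  rcases Subgraph.sup_adj.mp hab with hadj | hadj
  · have hle : B1.deleteEdges {s(a, b)} ≤ (B1 ⊔ B2).deleteEdges {s(a, b)} := by
      constructor
      · exact Set.subset_union_left
      · intro x y hxy
        exact ⟨Or.inl hxy.1, hxy.2⟩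
    have := (h1 a b hadj).map (Subgraph.inclusion hle)
    convert this using 2 <;> exact Subtype.ext rfl
  · have hle : B2.deleteEdges {s(a, b)} ≤ (B1 ⊔ B2).deleteEdges {s(a, b)} := by
      constructor
      · exact Set.subset_union_right
      · intro x y hxy
        exact ⟨Or.inr hxy.1, hxy.2⟩
    have := (h2 a b hadj).map (Subgraph.inclusion hle)
    convert this using 2 <;> exact Subtype.ext rfl

lemma blob_eq_of_shared {G : SimpleGraph V} {B1 B2 : G.Subgraph} (hb1 : IsBlob G B1)
    (hb2 : IsBlob G B2) {x : V} (hx1 : x ∈ B1.verts) (hx2 : x ∈ B2.verts) : B1 = B2 := by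
  have hconn : (B1 ⊔ B2).Connected :=
    Subgraph.connected_sup hb1.2.1.preconnected hb2.2.1.preconnected ⟨x, by rw [Subgraph.verts_inf]; exact ⟨hx1, hx2⟩⟩
  have hbl : Bridgeless (B1 ⊔ B2).coe := bridgeless_sup hb1.2.2.1 hb2.2.2.1
  have hnt : (B1 ⊔ B2).verts.Nontrivial :=
    hb1.1.mono (by rw [Subgraph.verts_sup]; exact Set.subset_union_left)
  have e1 : B1 = B1 ⊔ B2 := hb1.2.2.2 _ hnt hconn hbl le_sup_left
  have e2 : B2 = B1 ⊔ B2 := hb2.2.2.2 _ hnt hconn hbl le_sup_right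
  rw [e1, ← e2]

section ClaimC

variable {W : Type*} [Fintype W]

lemma claimC_swap {H S A : SimpleGraph W} {e f g : Sym2 W}
    (hStree : S.IsTree) (hSle : S ≤ H)
    (hRef : H.edgeSet \ S.edgeSet = {e, f}) (hef : e ≠ f)
    (hgS : g ∈ S.edgeSet)
    (hA : A = H.deleteEdges {f})
    (hgnb : ¬ A.IsBridge g) :
    (H.deleteEdges {g, f}).IsTree := by
  have heS : e ∉ S.edgeSet := by
    have : e ∈ H.edgeSet \ S.edgeSet := by rw [hRef]; exact Or.inl rfl
    exact this.2
  have hfS : f ∉ S.edgeSet := by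
    have : f ∈ H.edgeSet \ S.edgeSet := by rw [hRef]; exact Or.inr rfl
    exact this.2
  have heH : e ∈ H.edgeSet := by
    have : e ∈ H.edgeSet \ S.edgeSet := by rw [hRef]; exact Or.inl rfl
    exact this.1
  have hsub : S.edgeSet ⊆ H.edgeSet := edgeSet_mono hSle
  have hAedge : A.edgeSet = insert e S.edgeSet := by
    rw [hA, edgeSet_deleteEdges]
    ext x
    constructor
    · rintro ⟨hxH, hxf⟩
      by_cases hxS : x ∈ S.edgeSet
      · exact Or.inr hxS
      · have : x ∈ H.edgeSet \ S.edgeSet := ⟨hxH, hxS⟩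
        rw [hRef] at this
        rcases this with rfl | rfl
        · exact Or.inl rfl
        · simp at hxf
    · rintro (rfl | hxS)
      · exact ⟨heH, fun hx => hef (by simpa using hx)⟩
      · exact ⟨hsub hxS, fun hx => hfS (by rwa [Set.mem_singleton_iff.mp hx] at hxS)⟩
  have hSA : S ≤ A := by
    rw [← edgeSet_subset_edgeSet, hAedge]
    exact Set.subset_insert _ _
  have hAconn : A.Connected := hStree.isConnected.mono hSA
  have hAcard : A.edgeSet.ncard ≤ Fintype.card W := by
    rw [hAedge, Set.ncard_insert_of_notMem heS (Set.toFinite _)]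
    have := tree_ncard hStree
    omega
  have hgA : g ∈ A.edgeSet := by rw [hAedge]; exact Or.inr hgS
  have htree := del_one_tree hAconn hAcard hgA hgnb
  have heq : A.deleteEdges {g} = H.deleteEdges {g, f} := by
    rw [hA, deleteEdges_deleteEdges]
    congr 1
    ext x; simp [or_comm]
  rwa [heq] at htree

lemma path_shape {S : SimpleGraph W} {p v q : W} :
    ∀ (P : S.Walk p v), P.IsPath → p ≠ v → p ≠ q → q ≠ v →
    ¬ S.Adj p v → ¬ S.Adj q v →
    (∀ c d, s(c, d) ∈ P.edges → v ≠ c → v ≠ d → q ≠ c → q = d) →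
    ∃ z, S.Adj q z ∧ S.Adj z v ∧ z ≠ v ∧ z ≠ p ∧ z ≠ q := by
  intro P
  cases P with
  | nil => intro _ hpv; exact absurd rfl hpv
  | @cons _ w1 _ h1 P1 =>
    intro hP hpv hpq hqv hpvS hqvS hng
    have hw1 : w1 = q := by
      by_cases hv1 : v = w1
      · exact absurd h1 (hv1 ▸ hpvS)
      · exact (hng p w1 (by simp) (fun hvp => hpv hvp.symm) hv1
          (fun hqp => hpq hqp.symm)).symm
    subst hw1
    cases P1 with
    | nil => exact absurd rfl hqv
    | @cons _ z _ h2 P3 =>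
      rw [Walk.cons_isPath_iff] at hP
      obtain ⟨hP1, hpns⟩ := hP
      rw [Walk.cons_isPath_iff] at hP1
      obtain ⟨hP3, hqns⟩ := hP1
      have hzq : z ≠ w1 := fun hzq => hqns (hzq ▸ P3.start_mem_support)
      have hzp : z ≠ p := fun hzp => hpns (by
        rw [Walk.support_cons]
        exact List.mem_cons_of_mem _ (hzp ▸ P3.start_mem_support))
      have hzv : z ≠ v := fun hzv => hqvS (hzv ▸ h2)
      refine ⟨z, h2, ?_, hzv, hzp, hzq⟩
      cases P3 with
      | nil => exact absurd rfl hzv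
      | @cons _ z' _ h3 P4 =>
        have hmem : s(z, z') ∈ (Walk.cons h1 (Walk.cons h2 (Walk.cons h3 P4))).edges := by
          simp
        by_cases hvz : v = z
        · exact absurd hvz.symm hzv
        · by_cases hvz' : v = z'
          · exact hvz' ▸ h3
          · by_cases hqz : w1 = z
            · exact absurd hqz.symm hzq
            · have hq4 := hng z z' hmem hvz hvz' hqz
              exact absurd (by
                rw [Walk.support_cons]
                exact List.mem_cons_of_mem _ (hq4 ▸ P4.start_mem_support)) hqns

lemma claimC {H : SimpleGraph W} (hc : H.Connected)
    (hm : H.edgeSet.ncard ≤ Fintype.card W + 1) :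
    ∃ F ⊆ H.edgeSet, (∀ e ∈ F, ∀ f ∈ F, e ≠ f → ∀ x, x ∈ e → x ∉ f) ∧
      (H.deleteEdges F).IsTree := by
  classical
  obtain ⟨S, hSle, hStree⟩ := exists_spanning_tree hc
  have hScard := tree_ncard hStree
  have hsub : S.edgeSet ⊆ H.edgeSet := edgeSet_mono hSle
  set R := H.edgeSet \ S.edgeSet with hRdef
  have hRsub : R ⊆ H.edgeSet := Set.diff_subset
  have hRcard : R.ncard ≤ 2 := by
    rw [hRdef, Set.ncard_diff hsub (Set.toFinite _)]
    omega
  have hdelR : H.deleteEdges R = S := by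
    rw [← edgeSet_inj, edgeSet_deleteEdges, hRdef, Set.diff_diff_cancel_left hsub]
  by_cases hgood : ∀ e ∈ R, ∀ f ∈ R, e ≠ f → ∀ x, x ∈ e → x ∉ f
  · exact ⟨R, hRsub, hgood, hdelR ▸ hStree⟩
  push_neg at hgood
  obtain ⟨e, heR, f, hfR, hef, v, hve, hvf⟩ := hgood
  have hRef : R = {e, f} := by
    refine (Set.eq_of_subset_of_ncard_le ?_ ?_ (Set.toFinite _)).symm
    · intro x hx
      rcases hx with rfl | rfl
      · exact heR
      · exact hfR
    · rw [Set.ncard_pair hef]; omega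
  obtain ⟨p, hep⟩ : ∃ y, e = s(v, y) := Sym2.mem_iff_exists.mp hve
  obtain ⟨q, hfq⟩ : ∃ y, f = s(v, y) := Sym2.mem_iff_exists.mp hvf
  have heH : e ∈ H.edgeSet := hRsub heR
  have hfH : f ∈ H.edgeSet := hRsub hfR
  have hadjvp : H.Adj v p := by rw [hep] at heH; exact heH
  have hadjvq : H.Adj v q := by rw [hfq] at hfH; exact hfH
  have hpq : p ≠ q := by rintro rfl; exact hef (by rw [hep, hfq])
  have heS : e ∉ S.edgeSet := heR.2
  have hfS : f ∉ S.edgeSet := hfR.2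
  -- path in S from p to v
  obtain ⟨P0⟩ := hStree.isConnected.preconnected p v
  set P : S.Walk p v := (P0.toPath : S.Path p v).1 with hPdef
  have hPpath : P.IsPath := (P0.toPath : S.Path p v).2
  by_cases hg : ∃ c d, s(c, d) ∈ P.edges ∧ v ≠ c ∧ v ≠ d ∧ q ≠ c ∧ q ≠ d
  · -- good case: remove {s(c,d), f}
    obtain ⟨c, d, hcdP, hvc, hvd, hqc, hqd⟩ := hg
    have hcdS : s(c, d) ∈ S.edgeSet := P.edges_subset_edgeSet hcdP
    set A := H.deleteEdges {f} with hAdef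
    have hSA : S ≤ A := by
      intro x y hxy
      rw [hAdef, deleteEdges_adj]
      refine ⟨hSle hxy, fun hxf => hfS ?_⟩
      rw [← Set.mem_singleton_iff.mp hxf]
      exact hxy
    -- non-bridge of s(c,d) in A
    have hnb : ¬ A.IsBridge s(c, d) := by
      rw [isBridge_iff]
      intro hnr
      apply hnr
      have hcond : ∀ x ∈ P.edges, x ∈ A.edgeSet :=
        fun x hx => edgeSet_mono hSA (P.edges_subset_edgeSet hx)
      have hPAedges : (P.transfer A hcond).edges = P.edges := P.edges_transfer _
      set PA := P.transfer A hcond with hPAdef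
      have hPAnd : PA.edges.Nodup := by rw [hPAedges]; exact hPpath.isTrail.edges_nodup
      have hcdPA : s(c, d) ∈ PA.edges := by rw [hPAedges]; exact hcdP
      have hApv : A.Adj p v := by
        rw [hAdef, deleteEdges_adj]
        refine ⟨hadjvp.symm, fun hmem => hef ?_⟩
        rw [hep, ← Set.mem_singleton_iff.mp hmem, Sym2.eq_swap]
      have hpvne : s(p, v) ≠ s(c, d) := by
        intro hEq
        apply heS
        rw [hep, Sym2.eq_swap, hEq]
        exact hcdS
      rcases walk_split PA hPAnd hcdPA with ⟨q1, q2, h1, h2⟩ | ⟨q1, q2, h1, h2⟩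
      · refine ⟨(q1.reverse.append (Walk.cons hApv q2.reverse)).toDeleteEdges {s(c, d)} ?_⟩
        intro x hx
        simp only [Walk.edges_append, Walk.edges_reverse, Walk.edges_cons, List.mem_append,
          List.mem_reverse, List.mem_cons] at hx
        rw [Set.mem_singleton_iff]
        rcases hx with hx | hx | hx
        · exact (h1 x hx).2
        · rw [hx]; exact hpvne
        · exact (h2 x hx).2
      · refine Reachable.symm
          ⟨(q1.reverse.append (Walk.cons hApv q2.reverse)).toDeleteEdges {s(c, d)} ?_⟩
        intro x hx
        simp only [Walk.edges_append, Walk.edges_reverse, Walk.edges_cons, List.mem_append,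
          List.mem_reverse, List.mem_cons] at hx
        rw [Set.mem_singleton_iff]
        rcases hx with hx | hx | hx
        · exact (h1 x hx).2
        · rw [hx]; exact hpvne
        · exact (h2 x hx).2
    have htree := claimC_swap hStree hSle hRef hef hcdS hAdef hnb
    refine ⟨{s(c, d), f}, ?_, ?_, htree⟩
    · intro x hx
      rcases hx with rfl | rfl
      · exact hsub hcdS
      · exact hfH
    · intro e1 he1 e2 he2 hne x hxe1 hxe2
      have key : ∀ y, y ∈ s(c, d) → y ∈ f → False := by
        intro y hy1 hy2
        rw [hfq] at hy2
        rw [Sym2.mem_iff] at hy1 hy2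
        rcases hy1 with rfl | rfl <;> rcases hy2 with rfl | rfl
        · exact hvc rfl
        · exact hqc rfl
        · exact hvd rfl
        · exact hqd rfl
      rcases he1 with rfl | rfl <;> rcases he2 with rfl | rfl
      · exact hne rfl
      · exact key x hxe1 hxe2
      · exact key x hxe2 hxe1
      · exact hne rfl
  · -- bad case
    push_neg at hg
    have hz := path_shape P hPpath hadjvp.ne.symm hpq hadjvq.ne.symm
      (fun hS => heS (by rw [hep]; exact hS.symm))
      (fun hS => hfS (by rw [hfq]; exact hS.symm))
      hg
    obtain ⟨z, hqz, hzv, hzvne, hzp, hzq⟩ := hz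
    set A := H.deleteEdges {e} with hAdef
    have hRef' : R = {f, e} := by rw [hRef, Set.pair_comm]
    have hqzS : s(q, z) ∈ S.edgeSet := hqz
    have hnb : ¬ A.IsBridge s(q, z) := by
      rw [isBridge_iff]
      intro hnr
      apply hnr
      have hAqv : A.Adj q v := by
        rw [hAdef, deleteEdges_adj]
        refine ⟨hadjvq.symm, fun hm => ?_⟩
        have hEq := Set.mem_singleton_iff.mp hm
        rw [hep, Sym2.eq_iff] at hEq
        rcases hEq with ⟨hq, hv⟩ | ⟨hq, hv⟩
        · exact hadjvq.ne hq.symm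
        · exact hpq (hq.symm)
      have hAvz : A.Adj v z := by
        rw [hAdef, deleteEdges_adj]
        refine ⟨(hSle hzv).symm, fun hm => ?_⟩
        have hEq := Set.mem_singleton_iff.mp hm
        rw [hep, Sym2.eq_iff] at hEq
        rcases hEq with ⟨hv, hzp'⟩ | ⟨hv, hz'⟩
        · exact hzp hzp'
        · exact hadjvp.ne hv
      refine ⟨(Walk.cons hAqv (Walk.cons hAvz Walk.nil)).toDeleteEdges {s(q, z)} ?_⟩
      intro x hx
      simp only [Walk.edges_cons, Walk.edges_nil, List.mem_cons, List.not_mem_nil,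
        or_false] at hx
      rw [Set.mem_singleton_iff]
      rcases hx with rfl | rfl
      · intro hEq
        rw [Sym2.eq_iff] at hEq
        rcases hEq with ⟨-, hv⟩ | ⟨hq', hv⟩
        · exact hzvne hv.symm
        · exact hzq hq'.symm
      · intro hEq
        rw [Sym2.eq_iff] at hEq
        rcases hEq with ⟨hv, -⟩ | ⟨hv, hz'⟩
        · exact hadjvq.ne hv
        · exact hzvne hv.symm
    have htree := claimC_swap hStree hSle hRef' hef.symm hqzS hAdef hnb
    refine ⟨{s(q, z), e}, ?_, ?_, htree⟩
    · intro x hx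
      rcases hx with rfl | rfl
      · exact hsub hqzS
      · exact heH
    · intro e1 he1 e2 he2 hne x hxe1 hxe2
      have key : ∀ y, y ∈ s(q, z) → y ∈ e → False := by
        intro y hy1 hy2
        rw [hep] at hy2
        rw [Sym2.mem_iff] at hy1 hy2
        rcases hy1 with rfl | rfl <;> rcases hy2 with rfl | rfl
        · exact hadjvq.ne rfl
        · exact hpq rfl
        · exact hzvne rfl
        · exact hzp rfl
      rcases he1 with rfl | rfl <;> rcases he2 with rfl | rfl
      · exact hne rfl
      · exact key x hxe1 hxe2
      · exact key x hxe2 hxe1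
      · exact hne rfl

end ClaimC

omit [Fintype V] in
lemma coe_edge_image {G : SimpleGraph V} (H : G.Subgraph) :
    Sym2.map (Subtype.val : H.verts → V) '' H.coe.edgeSet = H.edgeSet := by
  ext e
  constructor
  · rintro ⟨e', he', rfl⟩
    induction e' using Sym2.ind with
    | _ x y => exact Subgraph.mem_edgeSet.mpr (by exact he' : H.Adj ↑x ↑y)
  · intro he
    induction e using Sym2.ind with
    | _ x y =>
      have hadj : H.Adj x y := Subgraph.mem_edgeSet.mp he
      refine ⟨s((⟨x, H.edge_vert hadj⟩ : H.verts), ⟨y, H.edge_vert hadj.symm⟩), ?_, ?_⟩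
      · exact hadj
      · rw [Sym2.map_pair_eq]

omit [Fintype V] in
lemma coe_edge_ncard {G : SimpleGraph V} (H : G.Subgraph) :
    H.coe.edgeSet.ncard = H.edgeSet.ncard := by
  rw [← coe_edge_image H]
  exact (Set.ncard_image_of_injective _ (Sym2.map.injective Subtype.val_injective)).symm

omit [Fintype V] in
lemma exists_adj_of_nontrivial_connected {G : SimpleGraph V} {H : G.Subgraph}
    (hnt : H.verts.Nontrivial) (hconn : H.Connected) : ∃ a b, H.Adj a b := by
  obtain ⟨x, hx, y, hy, hxy⟩ := hnt
  obtain ⟨w⟩ := hconn ⟨x, hx⟩ ⟨y, hy⟩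
  have hne : (⟨x, hx⟩ : H.verts) ≠ ⟨y, hy⟩ := fun h => hxy (congrArg Subtype.val h)
  cases w with
  | nil => exact absurd rfl hne
  | cons h p => exact ⟨x, _, h⟩

omit [Fintype V] in
lemma blob_not_acyclic {G : SimpleGraph V} {H : G.Subgraph} (hnt : H.verts.Nontrivial)
    (hconn : H.Connected) (hbl : Bridgeless H.coe) : ¬ H.coe.IsAcyclic := by
  intro hac
  obtain ⟨a, b, hab⟩ := exists_adj_of_nontrivial_connected hnt hconn
  have hadj : H.coe.Adj ⟨a, H.edge_vert hab⟩ ⟨b, H.edge_vert hab.symm⟩ := hab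
  exact hbl _ ⟨hadj, isAcyclic_iff_forall_adj_isBridge.mp hac hadj⟩

lemma blob_transfer {G : SimpleGraph V} {B : G.Subgraph} (hB : IsBlob G B)
    {F1 : Set (Sym2 V)} (hF1B : F1 ⊆ B.edgeSet)
    (htree : ((B.deleteEdges F1).coe).IsAcyclic)
    (hbound : ∀ B' : G.Subgraph, IsBlob G B' → B'.edgeSet.ncard ≤ B'.verts.ncard + 1)
    {B2 : (G.deleteEdges F1).Subgraph} (hB2 : IsBlob (G.deleteEdges F1) B2) :
    B2.edgeSet.ncard ≤ B2.verts.ncard + 1 ∧ ∀ x ∈ B2.verts, x ∉ B.verts := by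
  set ι : G.Subgraph :=
    { verts := B2.verts
      Adj := B2.Adj
      adj_sub := fun h => (G.deleteEdges_le F1) (B2.adj_sub h)
      edge_vert := fun h => B2.edge_vert h
      symm := B2.symm } with hιdef
  have hιcoe : ι.coe = B2.coe := rfl
  have hιconn : ι.Connected := by
    rw [Subgraph.connected_iff']
    rw [hιcoe]
    exact hB2.2.1.coe
  have hιbl : Bridgeless ι.coe := by rw [hιcoe]; exact hB2.2.2.1
  obtain ⟨B3, hB3, hle3⟩ := exists_blob_above (C := ι) hB2.1 hιconn hιbl
  have hdisj : ∀ x ∈ B3.verts, x ∉ B.verts := by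
    intro x hx3 hxB
    have hBeq : B3 = B := blob_eq_of_shared hB3 hB hx3 hxB
    -- derive contradiction: B2 has a cycle inside tree
    have hnac := blob_not_acyclic hB2.1 hB2.2.1 hB2.2.2.1
    rw [IsAcyclic] at hnac
    push_neg at hnac
    obtain ⟨v0, c2, hc2⟩ := hnac
    have hvmap : ∀ y : ↥B2.verts, (y : V) ∈ B.verts := by
      intro y
      have : (y : V) ∈ B3.verts := hle3.1 y.2
      rwa [hBeq] at this
    have hamap : ∀ {x y : ↥B2.verts}, B2.coe.Adj x y →
        ((B.deleteEdges F1).coe).Adj ⟨x, hvmap x⟩ ⟨y, hvmap y⟩ := by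
      intro x y hxy
      have h1 : B2.Adj ↑x ↑y := hxy
      have h2 : B.Adj ↑x ↑y := by
        have h3 : B3.Adj ↑x ↑y := hle3.2 h1
        rwa [hBeq] at h3
      have h4 : s((x : V), (y : V)) ∉ F1 := (deleteEdges_adj.mp (B2.adj_sub h1)).2
      exact ⟨h2, h4⟩
    let φ : B2.coe →g (B.deleteEdges F1).coe :=
      ⟨fun y => ⟨y, hvmap y⟩, fun h => hamap h⟩
    have hφinj : Function.Injective φ := by
      intro a b h
      have h2 : (φ a).1 = (φ b).1 := congrArg Subtype.val h
      exact Subtype.ext h2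
    exact htree (c2.map φ) (hc2.map hφinj)
  set κ : (G.deleteEdges F1).Subgraph :=
    { verts := B3.verts
      Adj := B3.Adj
      adj_sub := by
        intro a b hadj
        rw [deleteEdges_adj]
        refine ⟨B3.adj_sub hadj, fun hmem => ?_⟩
        have haB : a ∈ B.verts := B.edge_vert (Subgraph.mem_edgeSet.mp (hF1B hmem))
        exact hdisj a (B3.edge_vert hadj) haB
      edge_vert := fun h => B3.edge_vert h
      symm := B3.symm } with hκdef
  have hκcoe : κ.coe = B3.coe := rfl
  have hκconn : κ.Connected := by
    rw [Subgraph.connected_iff', hκcoe]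
    exact hB3.2.1.coe
  have hκbl : Bridgeless κ.coe := by rw [hκcoe]; exact hB3.2.2.1
  have hle : B2 ≤ κ := ⟨hle3.1, hle3.2⟩
  have hB2eq : B2 = κ := hB2.2.2.2 κ (hB3.1 : κ.verts.Nontrivial) hκconn hκbl hle
  have hedge : B2.edgeSet = B3.edgeSet := by
    rw [hB2eq]
    ext e
    induction e using Sym2.ind with
    | _ x y => exact Iff.rfl
  have hverts : B2.verts = B3.verts := by rw [hB2eq]
  constructor
  · rw [hedge, hverts]
    exact hbound B3 hB3
  · intro x hx
    rw [hverts] at hx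
    exact hdisj x hx

lemma main_induction : ∀ (n : ℕ) (G : SimpleGraph V), G.edgeSet.ncard ≤ n → G.Connected →
    (∀ B : G.Subgraph, IsBlob G B → B.edgeSet.ncard ≤ B.verts.ncard + 1) →
    ∃ F ⊆ G.edgeSet, (∀ e ∈ F, ∀ f ∈ F, e ≠ f → ∀ x, x ∈ e → x ∉ f) ∧
      (G.deleteEdges F).IsTree := by
  intro n
  induction n with
  | zero =>
    intro G hn hc hb
    have hacy : G.IsAcyclic := by
      by_contra hac
      obtain ⟨u, w, huw, -⟩ := not_acyclic_nonbridge hac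
      have hE : G.edgeSet = ∅ := by rw [← Set.ncard_eq_zero (Set.toFinite _)]; omega
      exact absurd ((mem_edgeSet G).mpr huw) (by simp [hE])
    exact ⟨∅, by simp, by simp, by rw [deleteEdges_empty]; exact ⟨hc, hacy⟩⟩
  | succ n ih =>
    intro G hn hc hb
    by_cases hac : G.IsAcyclic
    · exact ⟨∅, by simp, by simp, by rw [deleteEdges_empty]; exact ⟨hc, hac⟩⟩
    obtain ⟨u, w, huw, hnb⟩ := not_acyclic_nonbridge hac
    obtain ⟨B, hB, hBadj⟩ := exists_blob_of_nonbridge huw hnb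
    haveI : Fintype ↥B.verts := Fintype.ofFinite _
    have hvcard : Fintype.card ↥B.verts = B.verts.ncard := by
      rw [← Nat.card_coe_set_eq, Nat.card_eq_fintype_card]
    have hecard : B.coe.edgeSet.ncard = B.edgeSet.ncard := coe_edge_ncard B
    obtain ⟨F', hF'sub, hF'disj, hF'tree⟩ := claimC hB.2.1.coe
      (by rw [hecard, hvcard]; exact hb B hB)
    set F1 : Set (Sym2 V) := Sym2.map (Subtype.val) '' F' with hF1def
    have hF1B : F1 ⊆ B.edgeSet := by
      rintro _ ⟨e', he', rfl⟩
      rw [← coe_edge_image B]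
      exact ⟨e', hF'sub he', rfl⟩
    have hF1G : F1 ⊆ G.edgeSet := hF1B.trans B.edgeSet_subset
    have hF1ne : F1.Nonempty := by
      rcases Set.eq_empty_or_nonempty F' with rfl | hne
      · exfalso
        rw [deleteEdges_empty] at hF'tree
        exact blob_not_acyclic hB.1 hB.2.1 hB.2.2.1 hF'tree.IsAcyclic
      · exact hne.image _
    have htreeB : ((B.deleteEdges F1).coe).IsTree := by
      rw [hF1def, ← Subgraph.deleteEdges_coe_eq]
      exact hF'tree
    set G2 := G.deleteEdges F1 with hG2def
    have hG2conn : G2.Connected := by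
      rw [connected_iff] at hc ⊢
      refine ⟨fun a b => reachable_relay ?_ (hc.1 a b), hc.2⟩
      intro x y hxy
      by_cases hmem : s(x, y) ∈ F1
      · have hxB : x ∈ B.verts := B.edge_vert (Subgraph.mem_edgeSet.mp (hF1B hmem))
        have hyB : y ∈ B.verts := B.edge_vert (Subgraph.mem_edgeSet.mp (hF1B hmem)).symm
        have hr := htreeB.isConnected.preconnected ⟨x, hxB⟩ ⟨y, hyB⟩
        have hadjmap : ∀ {a b : ↥(B.deleteEdges F1).verts},
            ((B.deleteEdges F1).coe).Adj a b → G2.Adj ↑a ↑b := by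
          intro a b hab
          have h1 : (B.deleteEdges F1).Adj ↑a ↑b := hab
          rw [Subgraph.deleteEdges_adj] at h1
          rw [hG2def, deleteEdges_adj]
          exact ⟨B.adj_sub h1.1, h1.2⟩
        exact Reachable.map (⟨Subtype.val, fun hab => hadjmap hab⟩ :
          ((B.deleteEdges F1).coe) →g G2) hr
      · exact Adj.reachable (by rw [hG2def, deleteEdges_adj]; exact ⟨hxy, hmem⟩)
    have htrans : ∀ B2 : G2.Subgraph, IsBlob G2 B2 →
        B2.edgeSet.ncard ≤ B2.verts.ncard + 1 ∧ ∀ x ∈ B2.verts, x ∉ B.verts :=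
      fun B2 hB2 => blob_transfer hB hF1B htreeB.IsAcyclic hb hB2
    have hG2card : G2.edgeSet.ncard ≤ n := by
      rw [hG2def, edgeSet_deleteEdges]
      have h1 := Set.ncard_diff hF1G (Set.toFinite _)
      have h2 : 0 < F1.ncard := by
        rw [Set.ncard_pos (Set.toFinite _)]
        exact hF1ne
      omega
    obtain ⟨F2, hF2sub, hF2disj, hF2tree⟩ := ih G2 hG2card hG2conn
      (fun B2 hB2 => (htrans B2 hB2).1)
    have hF1vert : ∀ e1 ∈ F1, ∀ x, x ∈ e1 → x ∈ B.verts := by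
      intro e1 he1
      induction e1 using Sym2.ind with
      | _ c d =>
        intro x hx
        have hcd := Subgraph.mem_edgeSet.mp (hF1B he1)
        rcases Sym2.mem_iff.mp hx with rfl | rfl
        · exact B.edge_vert hcd
        · exact B.edge_vert hcd.symm
    have hF1disj : ∀ e ∈ F1, ∀ f ∈ F1, e ≠ f → ∀ x, x ∈ e → x ∉ f := by
      rintro _ ⟨a, ha, rfl⟩ _ ⟨b, hbm, rfl⟩ hne x hx1 hx2
      have hab : a ≠ b := fun h => hne (by rw [h])
      obtain ⟨x1, hx1', hxv1⟩ := Sym2.mem_map.mp hx1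
      obtain ⟨x2, hx2', hxv2⟩ := Sym2.mem_map.mp hx2
      have hx12 : x1 = x2 := Subtype.val_injective (hxv1.trans hxv2.symm)
      exact hF'disj a ha b hbm hab x1 hx1' (hx12 ▸ hx2')
    have hcross : ∀ e2 ∈ F2, ∀ x, x ∈ e2 → x ∉ B.verts := by
      intro e2 he2
      induction e2 using Sym2.ind with
      | _ a2 b2 =>
        intro x hx
        have hadj2 : G2.Adj a2 b2 := (mem_edgeSet G2).mp (hF2sub he2)
        have hnb2 : ¬ G2.IsBridge s(a2, b2) := by
          rw [isBridge_iff]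
          intro hnr
          apply hnr
          have hle2 : G2.deleteEdges F2 ≤ G2 \ fromEdgeSet {s(a2, b2)} := by
            have : G2 \ fromEdgeSet {s(a2, b2)} = G2.deleteEdges {s(a2, b2)} := rfl
            rw [this]
            intro c d hcd
            rw [deleteEdges_adj] at hcd ⊢
            refine ⟨hcd.1, fun hm => hcd.2 ?_⟩
            rw [Set.mem_singleton_iff.mp hm]
            exact he2
          exact Reachable.mono hle2 (hF2tree.isConnected.preconnected a2 b2)
        obtain ⟨B2', hB2', hB2adj⟩ := exists_blob_of_nonbridge hadj2 hnb2
        have hd := (htrans B2' hB2').2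
        rcases Sym2.mem_iff.mp hx with rfl | rfl
        · exact hd _ (B2'.edge_vert hB2adj)
        · exact hd _ (B2'.edge_vert hB2adj.symm)
    refine ⟨F1 ∪ F2, Set.union_subset hF1G (hF2sub.trans (by
      rw [hG2def, edgeSet_deleteEdges]; exact Set.diff_subset)), ?_, ?_⟩
    · intro e1 he1 e2 he2 hne x hx1 hx2
      rcases he1 with he1 | he1 <;> rcases he2 with he2 | he2
      · exact hF1disj e1 he1 e2 he2 hne x hx1 hx2
      · exact hcross e2 he2 x hx2 (hF1vert e1 he1 x hx1)
      · exact hcross e1 he1 x hx1 (hF1vert e2 he2 x hx2)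
      · exact hF2disj e1 he1 e2 he2 hne x hx1 hx2
    · rw [← deleteEdges_deleteEdges]
      exact hF2tree

end TBaux


open TBaux in
/-- Every proper level-2 network is tree-based. -/
theorem stmt5 {V : Type*} [Fintype V] (G : SimpleGraph V) (X : Set V)
    (hN : IsNetwork G X) (hP : ProperNet G X) (hL : Level G 2) :
    TreeBased G X := by
  classical
  obtain ⟨hc, hdeg, hX⟩ := hN
  have hb : ∀ B : G.Subgraph, IsBlob G B → B.edgeSet.ncard ≤ B.verts.ncard + 1 := by
    intro B hBl
    have h1 := hL B hBl
    have h2 : 1 ≤ B.verts.ncard := by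
      obtain ⟨x, hx, y, hy, hxy⟩ := hBl.1
      have h3 : ({x, y} : Set V).ncard ≤ B.verts.ncard :=
        Set.ncard_le_ncard (by rintro z (rfl | rfl); exacts [hx, hy]) (Set.toFinite _)
      rw [Set.ncard_pair hxy] at h3
      omega
    omega
  obtain ⟨F, hFsub, hFdisj, hFtree⟩ := main_induction G.edgeSet.ncard G le_rfl hc hb
  refine ⟨G.deleteEdges F, deleteEdges_le F, hFtree, ?_⟩
  rw [← hX]
  ext v
  simp only [Set.mem_setOf_eq]
  by_cases htouch : ∃ e ∈ F, v ∈ e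
  · obtain ⟨e0, he0F, hve0⟩ := htouch
    obtain ⟨w0, rfl⟩ := Sym2.mem_iff_exists.mp hve0
    have hadj : G.Adj v w0 := (mem_edgeSet G).mp (hFsub he0F)
    have hdegG : deg G v = 3 := by
      rcases hdeg v with hle | h3
      · exfalso
        unfold deg at hle
        have hsingle : G.neighborSet v = {w0} := by
          apply Set.eq_singleton_iff_unique_mem.mpr
          refine ⟨hadj, ?_⟩
          intro x hxmem
          by_contra hxw
          have h2 : ({x, w0} : Set V).ncard ≤ (G.neighborSet v).ncard :=
            Set.ncard_le_ncard (by rintro z (rfl | rfl); exacts [hxmem, hadj]) (Set.toFinite _)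
          rw [Set.ncard_pair hxw] at h2
          omega
        have hiso : ∀ x, ¬ (G.deleteEdges F).Adj v x := by
          intro x hx
          rw [deleteEdges_adj] at hx
          have hx1 : x ∈ G.neighborSet v := hx.1
          rw [hsingle] at hx1
          rw [Set.mem_singleton_iff.mp hx1] at hx
          exact hx.2 he0F
        obtain ⟨p⟩ := hFtree.isConnected.preconnected v w0
        cases p with
        | nil => exact hadj.ne rfl
        | cons h p => exact hiso _ h
      · exact h3
    have hTnb : (G.deleteEdges F).neighborSet v = G.neighborSet v \ {w0} := by
      ext x
      simp only [mem_neighborSet, deleteEdges_adj, Set.mem_diff, Set.mem_singleton_iff]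
      constructor
      · rintro ⟨h1, h2⟩
        exact ⟨h1, fun hxw => h2 (hxw ▸ he0F)⟩
      · rintro ⟨h1, h2⟩
        refine ⟨h1, fun hmem => ?_⟩
        have hne : s(v, x) ≠ s(v, w0) := by
          intro hEq
          rw [Sym2.eq_iff] at hEq
          rcases hEq with ⟨-, hx0⟩ | ⟨-, hxv⟩
          · exact h2 hx0
          · exact h1.ne hxv.symm
        exact hFdisj _ hmem _ he0F hne v (by simp) (by simp)
    have hdegT : deg (G.deleteEdges F) v = 2 := by
      unfold deg at hdegG ⊢
      rw [hTnb]
      have := Set.ncard_diff_singleton_add_one (show w0 ∈ G.neighborSet v from hadj)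
        (Set.toFinite _)
      omega
    rw [hdegT, hdegG]
    omega
  · push_neg at htouch
    have heq : (G.deleteEdges F).neighborSet v = G.neighborSet v := by
      ext x
      simp only [mem_neighborSet, deleteEdges_adj]
      constructor
      · rintro ⟨h1, -⟩
        exact h1
      · intro h1
        exact ⟨h1, fun hmem => htouch _ hmem (by simp)⟩
    unfold deg
    rw [heq]
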